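/- For every 0 < p < 1, the discrete Laguerre functions form a complete system in ℓ²(ℕ,ℝ): if w : ℕ → ℝ is square-summable and Σ_{t=0}^∞ w(t)·ℓ_j(t;p) = 0 for every j ∈ ℕ, then w = 0; equivalently, the closed linear span of {ℓ_j(·;p) : j ∈ ℕ} is all of ℓ²(ℕ,ℝ). -/

import Mathlib

/-- The discrete Laguerre functions `ℓ_j(t; p)` in time-domain. -/
noncomputable def discreteLaguerre (p : ℝ) : ℕ → ℕ → ℝ
  | 0, t => Real.sqrt (1 - p) * Real.sqrt p ^ t
  | j + 1, 0 => -Real.sqrt p * discreteLaguerre p j 0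
  | j + 1, t + 1 =>
      Real.sqrt p * discreteLaguerre p (j + 1) t + discreteLaguerre p j t
        - Real.sqrt p * discreteLaguerre p j (t + 1)
  termination_by j t => (j, t)

namespace DLaux

/-- Coefficients of `ℓ_j` in the basis `e i t = C(t,i) a^(t-i)`. -/
def c (a : ℝ) : ℕ → ℕ → ℝ
  | 0, 0 => 1
  | 0, _ + 1 => 0
  | j + 1, 0 => -a * c a j 0
  | j + 1, i + 1 => (1 - a ^ 2) * c a j i - a * c a j (i + 1)

/-- Basis functions `e a i t = C(t,i) * a^(t-i)`. -/
noncomputable def e (a : ℝ) (i t : ℕ) : ℝ := (t.choose i : ℝ) * a ^ (t - i)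

lemma c_eq_zero_of_lt (a : ℝ) : ∀ j i, j < i → c a j i = 0 := by
  intro j
  induction j with
  | zero => intro i hi; match i, hi with | i + 1, _ => rfl
  | succ j ih =>
    intro i hi
    match i, hi with
    | i + 1, hi =>
      have h1 : j < i := Nat.lt_of_succ_lt_succ hi
      show (1 - a ^ 2) * c a j i - a * c a j (i + 1) = 0
      rw [ih i h1, ih (i + 1) (h1.trans (Nat.lt_succ_self i))]
      ring

lemma c_diag (a : ℝ) : ∀ j, c a j j = (1 - a ^ 2) ^ j := by
  intro j
  induction j with
  | zero => rfl
  | succ j ih =>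
    show (1 - a ^ 2) * c a j j - a * c a j (j + 1) = _
    rw [ih, c_eq_zero_of_lt a j (j + 1) (Nat.lt_succ_self j)]
    ring

lemma e_zero_succ (a : ℝ) (t : ℕ) : e a 0 (t + 1) = a * e a 0 t := by
  simp [e, pow_succ, mul_comm]

lemma e_succ_succ (a : ℝ) (i t : ℕ) :
    e a (i + 1) (t + 1) = a * e a (i + 1) t + e a i t := by
  unfold e
  rcases le_or_gt (i + 1) t with h | h
  · rw [Nat.choose_succ_succ' t i]
    push_cast
    have h2 : t - i = (t - (i + 1)) + 1 := by omega
    rw [h2, pow_succ]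
    ring
  · have h1 : t.choose (i + 1) = 0 := Nat.choose_eq_zero_of_lt h
    rcases Nat.lt_or_ge t i with h2 | h2
    · have h3 : (t + 1).choose (i + 1) = 0 := Nat.choose_eq_zero_of_lt (by omega)
      have h4 : t.choose i = 0 := Nat.choose_eq_zero_of_lt h2
      simp [h1, h3, h4]
    · have h5 : t = i := by omega
      subst h5
      simp [h1, Nat.choose_self]

/-- `F a j t` is the candidate closed form `∑_{i≤j} c_{j,i} e_i(t)`. -/
noncomputable def F (a : ℝ) (j t : ℕ) : ℝ :=
  ∑ i ∈ Finset.range (j + 1), c a j i * e a i t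

lemma e_at_zero (a : ℝ) (i : ℕ) : e a i 0 = if i = 0 then 1 else 0 := by
  cases i with
  | zero => simp [e]
  | succ i => simp [e]

lemma F_zero_eq (a : ℝ) (t : ℕ) : F a 0 t = a ^ t := by
  simp [F, e, c]

lemma F_at_zero (a : ℝ) (j : ℕ) : F a j 0 = c a j 0 := by
  unfold F
  rw [Finset.sum_eq_single 0]
  · simp [e_at_zero]
  · intro i _ hi; simp [e_at_zero, hi]
  · intro h; simp at h

lemma F_succ_zero (a : ℝ) (j : ℕ) : F a (j + 1) 0 = -a * F a j 0 := by
  rw [F_at_zero, F_at_zero]; rfl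

lemma e_shift_sum (a : ℝ) (j : ℕ) (t : ℕ) (d : ℕ → ℝ) :
    ∑ i ∈ Finset.range (j + 1), d i * e a i (t + 1)
      = a * (∑ i ∈ Finset.range (j + 1), d i * e a i t)
        + ∑ i ∈ Finset.range j, d (i + 1) * e a i t := by
  rw [Finset.sum_range_succ' _ j]
  rw [Finset.sum_range_succ' (fun i => d i * e a i t) j]
  simp only [e_succ_succ, e_zero_succ, mul_add, Finset.sum_add_distrib, Finset.mul_sum]
  have : ∀ x ∈ Finset.range j, d (x + 1) * (a * e a (x + 1) t) = a * (d (x + 1) * e a (x + 1) t) :=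
    fun x _ => by ring
  rw [Finset.sum_congr rfl this]
  ring

lemma F_rec (a : ℝ) (j t : ℕ) :
    F a (j + 1) (t + 1) = a * F a (j + 1) t + F a j t - a * F a j (t + 1) := by
  unfold F
  rw [e_shift_sum a (j + 1) t (c a (j + 1)), e_shift_sum a j t (c a j)]
  have hc : ∀ i, c a (j + 1) (i + 1) = (1 - a ^ 2) * c a j i - a * c a j (i + 1) :=
    fun i => rfl
  simp only [hc, sub_mul, Finset.sum_sub_distrib]
  rw [Finset.sum_range_succ (fun i => a * c a j (i + 1) * e a i t) j,
    c_eq_zero_of_lt a j (j + 1) (Nat.lt_succ_self j)]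
  simp only [mul_assoc, ← Finset.mul_sum]
  ring

/-- Closed form for the discrete Laguerre functions. -/
lemma laguerre_eq (p : ℝ) : ∀ j t,
    discreteLaguerre p j t = Real.sqrt (1 - p) * F (Real.sqrt p) j t := by
  intro j
  induction j with
  | zero =>
    intro t
    rw [F_zero_eq, discreteLaguerre]
  | succ j ih =>
    intro t
    induction t with
    | zero =>
      rw [discreteLaguerre, ih 0, F_succ_zero]
      ring
    | succ t iht =>
      rw [discreteLaguerre, ih t, ih (t + 1), iht, F_rec]
      ring

/-- Summability of the basic series. -/
lemma summable_we {w : ℕ → ℝ} {C : ℝ} (hC : ∀ t, |w t| ≤ C)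
    {b : ℝ} (hb0 : 0 < b) (hb1 : b < 1) (k : ℕ) :
    Summable (fun t => |w t * e b k t|) := by
  have hbnn : (0:ℝ) ≤ b := le_of_lt hb0
  have hg : Summable (fun t : ℕ => (C * b⁻¹ ^ k) * ((t : ℝ) ^ k * b ^ t)) := by
    apply Summable.mul_left
    have := summable_pow_mul_geometric_of_norm_lt_one (R := ℝ) k
      (r := b) (by rw [Real.norm_eq_abs, abs_of_nonneg hbnn]; exact hb1)
    simpa [mul_comm] using this
  apply Summable.of_nonneg_of_le (fun t => abs_nonneg _) _ hg
  intro t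
  have hC0 : 0 ≤ C := le_trans (abs_nonneg _) (hC 0)
  rw [abs_mul]
  have he : |e b k t| = (t.choose k : ℝ) * b ^ (t - k) := by
    rw [e, abs_mul, abs_of_nonneg (by positivity : (0:ℝ) ≤ (t.choose k : ℝ)),
      abs_of_nonneg (by positivity)]
  rw [he]
  rcases le_or_gt k t with h | h
  · have hch : (t.choose k : ℝ) ≤ (t : ℝ) ^ k := by
      exact_mod_cast Nat.choose_le_pow t k
    have hpow : b ^ (t - k) = b⁻¹ ^ k * b ^ t := by
      have hmul : b ^ (t - k) * b ^ k = b ^ t := by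
        rw [← pow_add, Nat.sub_add_cancel h]
      rw [inv_pow, eq_inv_mul_iff_mul_eq₀ (by positivity), mul_comm]
      exact hmul
    rw [hpow]
    calc |w t| * ((t.choose k : ℝ) * (b⁻¹ ^ k * b ^ t))
        ≤ C * ((t:ℝ) ^ k * (b⁻¹ ^ k * b ^ t)) := by
          apply mul_le_mul (hC t) _ (by positivity) hC0
          apply mul_le_mul_of_nonneg_right hch (by positivity)
      _ = C * b⁻¹ ^ k * ((t:ℝ) ^ k * b ^ t) := by ring
  · rw [Nat.choose_eq_zero_of_lt h]
    simp
    positivity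

lemma choose_helper (t k m : ℕ) :
    (t.choose k : ℝ) * ((t - k).choose m : ℝ)
      = (t.choose (k + m) : ℝ) * ((k + m).choose k : ℝ) := by
  rcases le_or_gt (k + m) t with h | h
  · have := Nat.choose_mul (n := t) (k := k + m) (s := k) (Nat.le_add_right k m)
    rw [Nat.add_sub_cancel_left] at this
    exact_mod_cast this.symm
  · rcases le_or_gt k t with h2 | h2
    · rw [Nat.choose_eq_zero_of_lt (show t - k < m by omega),
        Nat.choose_eq_zero_of_lt h]
      simp
    · rw [Nat.choose_eq_zero_of_lt h2, Nat.choose_eq_zero_of_lt h]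
      simp

/-- Binomial expansion as a tsum. -/
lemma key_binom (b : ℝ) (n : ℕ) (z : ℝ) :
    ∑' m : ℕ, (((n).choose m : ℝ) * b ^ (n - m) * z ^ m) = (b + z) ^ n := by
  rw [tsum_eq_sum (s := Finset.range (n + 1))
    (fun m hm => by
      rw [Nat.choose_eq_zero_of_lt (by simpa using hm)]
      simp)]
  rw [add_comm b z, add_pow]
  exact Finset.sum_congr rfl fun m hm => by ring

/-- The translation ("jump") lemma: if all generalized moments vanish at `b`,
they vanish at `b + y` provided `b + |y| < 1`. -/
lemma jump {w : ℕ → ℝ} {C : ℝ} (hC : ∀ t, |w t| ≤ C)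
    {b y : ℝ} (hb : 0 < b) (habs : b + |y| < 1)
    (hN : ∀ k, ∑' t, w t * e b k t = 0) (k : ℕ) :
    ∑' t, w t * e (b + y) k t = 0 := by
  set f : ℕ → ℕ → ℝ := fun t m =>
    (w t * (t.choose k : ℝ)) * (((t - k).choose m : ℝ) * b ^ (t - k - m) * y ^ m) with hf
  have hb1 : b < 1 := lt_of_le_of_lt (le_add_of_nonneg_right (abs_nonneg y)) habs
  have hb'0 : 0 < b + |y| := lt_of_lt_of_le hb (le_add_of_nonneg_right (abs_nonneg y))
  have hfm : ∀ m t, f t m = (((k + m).choose k : ℝ) * y ^ m) * (w t * e b (k + m) t) := by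
    intro m t
    show (w t * (t.choose k : ℝ)) * (((t - k).choose m : ℝ) * b ^ (t - k - m) * y ^ m) = _
    rw [e, Nat.sub_sub]
    calc (w t * (t.choose k : ℝ)) * (((t - k).choose m : ℝ) * b ^ (t - (k + m)) * y ^ m)
        = ((t.choose k : ℝ) * ((t - k).choose m : ℝ))
            * (w t * b ^ (t - (k + m)) * y ^ m) := by ring
      _ = _ := by rw [choose_helper]; ring
  have hcol : ∀ m, Summable (fun t => f t m) := by
    intro m
    simp only [hfm]
    exact (Summable.of_abs (summable_we hC hb hb1 (k + m))).mul_left _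
  have hrow : ∀ g : ℕ → ℝ, ∀ z : ℝ, ∀ t, Summable (fun m => g t * (((t - k).choose m : ℝ)
      * b ^ (t - k - m) * z ^ m)) := by
    intro g z t
    apply summable_of_ne_finset_zero (s := Finset.range (t - k + 1))
    intro m hm
    rw [Nat.choose_eq_zero_of_lt (by simpa using hm)]
    simp
  have habsf : ∀ t m, |f t m| = |w t * (t.choose k : ℝ)|
      * (((t - k).choose m : ℝ) * b ^ (t - k - m) * |y| ^ m) := by
    intro t m
    show |(w t * (t.choose k : ℝ)) * (((t - k).choose m : ℝ) * b ^ (t - k - m) * y ^ m)| = _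
    simp only [abs_mul, abs_pow, abs_of_nonneg hb.le,
      abs_of_nonneg (by positivity : (0:ℝ) ≤ ((t - k).choose m : ℝ))]
  have habsrow : ∀ t, ∑' m, |f t m| = |w t * e (b + |y|) k t| := by
    intro t
    simp only [habsf]
    rw [tsum_mul_left, key_binom, e, abs_mul, abs_mul, abs_mul,
      abs_of_nonneg (by positivity : (0:ℝ) ≤ ((t.choose k : ℝ))),
      abs_of_nonneg (by positivity : (0:ℝ) ≤ (b + |y|) ^ (t - k))]
    ring
  have habssum : Summable (fun q : ℕ × ℕ => |f q.1 q.2|) := by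
    rw [summable_prod_of_nonneg (fun q => abs_nonneg _)]
    constructor
    · intro t
      exact ((hrow (fun t => |w t * (t.choose k : ℝ)|) |y| t).congr
        (fun m => (habsf t m).symm))
    · simp only [habsrow]
      exact summable_we hC hb'0 habs k
  have hsum : Summable (Function.uncurry f) :=
    Summable.of_abs habssum
  have hrowf : ∀ t, Summable (f t) :=
    fun t => (hrow (fun t => w t * (t.choose k : ℝ)) y t)
  have step1 : ∀ t, w t * e (b + y) k t = ∑' m, f t m := by
    intro t
    show _ = ∑' m, (w t * (t.choose k : ℝ)) * (((t - k).choose m : ℝ)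
      * b ^ (t - k - m) * y ^ m)
    rw [tsum_mul_left, key_binom, e]
    ring
  have hzero : ∀ m, ∑' t, f t m = 0 := by
    intro m
    simp only [hfm]
    rw [tsum_mul_left, hN (k + m), mul_zero]
  calc ∑' t, w t * e (b + y) k t = ∑' t, ∑' m, f t m := tsum_congr step1
    _ = ∑' m, ∑' t, f t m := (Summable.tsum_comm' hsum hrowf hcol).symm
    _ = 0 := by simp only [hzero, tsum_zero]

end DLaux

/-- Completeness of the discrete Laguerre system in `ℓ²(ℕ, ℝ)`: a square-summable
sequence orthogonal to every `ℓ_j(·; p)` vanishes identically. -/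
theorem discreteLaguerre_complete (p : ℝ) (hp0 : 0 < p) (hp1 : p < 1)
    (w : ℕ → ℝ) (hw : Summable fun t => w t ^ 2)
    (horth : ∀ j : ℕ, (∑' t : ℕ, w t * discreteLaguerre p j t) = 0) :
    w = 0 := by
  classical
  open DLaux in
  set a := Real.sqrt p with ha
  have ha0 : 0 < a := Real.sqrt_pos.mpr hp0
  have ha1 : a < 1 := by
    rw [ha, show (1:ℝ) = Real.sqrt 1 by rw [Real.sqrt_one]]
    exact Real.sqrt_lt_sqrt hp0.le hp1
  have hsq : a ^ 2 = p := Real.sq_sqrt hp0.le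
  -- uniform bound on w
  set C := Real.sqrt (∑' t, w t ^ 2) with hCdef
  have hC : ∀ t, |w t| ≤ C := by
    intro t
    have h1 : w t ^ 2 ≤ ∑' t, w t ^ 2 := Summable.le_tsum hw t (fun j _ => sq_nonneg _)
    have := Real.sqrt_le_sqrt h1
    rwa [Real.sqrt_sq_eq_abs] at this
  -- Step A : all moments vanish at a
  have hs : (0:ℝ) < Real.sqrt (1 - p) := Real.sqrt_pos.mpr (by linarith)
  have stepA : ∀ k, ∑' t, w t * DLaux.e a k t = 0 := by
    intro k
    induction k using Nat.strong_induction_on with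
    | _ k ih =>
      have hsummand : ∀ i, Summable (fun t => w t * DLaux.e a i t) :=
        fun i => Summable.of_abs (summable_we hC ha0 ha1 i)
      have hexp : ∑' t, w t * discreteLaguerre p k t
          = ∑ i ∈ Finset.range (k + 1),
              (Real.sqrt (1 - p) * c a k i) * (∑' t, w t * DLaux.e a i t) := by
        have h1 : ∀ t, w t * discreteLaguerre p k t
            = ∑ i ∈ Finset.range (k + 1),
                (Real.sqrt (1 - p) * c a k i) * (w t * DLaux.e a i t) := by
          intro t
          rw [laguerre_eq p k t, F, Finset.mul_sum, Finset.mul_sum]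
          exact Finset.sum_congr rfl fun i _ => by ring
        rw [tsum_congr h1]
        rw [Summable.tsum_finsetSum (fun i _ => (hsummand i).mul_left _)]
        exact Finset.sum_congr rfl fun i _ => tsum_mul_left
      have h0 := horth k
      rw [hexp, Finset.sum_range_succ] at h0
      have hz : ∀ i ∈ Finset.range k,
          (Real.sqrt (1 - p) * c a k i) * (∑' t, w t * DLaux.e a i t) = 0 := by
        intro i hi
        rw [ih i (Finset.mem_range.mp hi), mul_zero]
      rw [Finset.sum_eq_zero hz, zero_add, c_diag, hsq] at h0
      have hne : Real.sqrt (1 - p) * (1 - p) ^ k ≠ 0 := by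
        have : (0:ℝ) < 1 - p := by linarith
        positivity
      exact (mul_eq_zero.mp h0).resolve_left hne
  -- Descent to 0
  have descent : ∀ n : ℕ, ∀ b : ℝ, 0 < b → b ≤ a → b < 1/2 + n * ((1 - a)/2) →
      (∀ k, ∑' t, w t * DLaux.e b k t = 0) → ∀ k, ∑' t, w t * DLaux.e 0 k t = 0 := by
    intro n
    induction n with
    | zero =>
      intro b hb0 hba hbn hZ k
      have habs : b + |(-b)| < 1 := by
        rw [abs_neg, abs_of_nonneg hb0.le]
        simp at hbn
        linarith
      have := jump hC hb0 habs hZ k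
      rwa [show b + -b = (0:ℝ) by ring] at this
    | succ n ihn =>
      intro b hb0 hba hbn hZ k
      rcases lt_or_ge b (1/2 + n * ((1 - a)/2)) with h | h
      · exact ihn b hb0 hba h hZ k
      · set b' := b - (1 - a)/2 with hb'
        have hb'0 : 0 < b' := by
          have hn0 : (0:ℝ) ≤ (n:ℝ) * ((1 - a)/2) :=
            mul_nonneg (Nat.cast_nonneg n) (by linarith)
          have h12 : (1:ℝ)/2 ≤ b := by linarith
          rw [hb']
          linarith
        have habs : b + |(-((1 - a)/2))| < 1 := by
          rw [abs_neg, abs_of_nonneg (by linarith : (0:ℝ) ≤ (1 - a)/2)]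
          linarith
        have hZ' : ∀ k, ∑' t, w t * DLaux.e b' k t = 0 := by
          intro k
          have := jump hC hb0 habs hZ k
          rwa [show b + -((1 - a)/2) = b' by rw [hb']; ring] at this
        have hb'a : b' ≤ a := by rw [hb']; linarith
        have hb'n : b' < 1/2 + n * ((1 - a)/2) := by
          rw [hb']
          push_cast at hbn ⊢
          linarith
        exact ihn b' hb'0 hb'a hb'n hZ' k
  -- choose n large enough and conclude moments vanish at 0
  obtain ⟨n, hn⟩ := exists_nat_gt ((a - 1/2) / ((1 - a)/2))
  have hstart : a < 1/2 + n * ((1 - a)/2) := by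
    have hpos : (0:ℝ) < (1 - a)/2 := by linarith
    rw [div_lt_iff₀ hpos] at hn
    linarith
  have hzero : ∀ k, ∑' t, w t * DLaux.e 0 k t = 0 :=
    descent n a ha0 le_rfl hstart stepA
  -- extract coefficients
  funext t
  have h1 : ∑' s, w s * DLaux.e 0 t s = w t := by
    rw [tsum_eq_single t]
    · rw [DLaux.e, Nat.choose_self, Nat.sub_self]
      simp
    · intro s hs
      rcases lt_or_gt_of_ne hs with h | h
      · rw [DLaux.e, Nat.choose_eq_zero_of_lt h]
        simp
      · rw [DLaux.e, zero_pow (by omega : s - t ≠ 0)]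
        simp
  have := hzero t
  rw [h1] at this
  simpa using this
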